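/- Let R be a quasi-local subring of a complete local ring (T, M) such that R has maximal ideal R ∩ M, the composite map R → T/M² is surjective, and IT ∩ R = IR for every finitely generated ideal I of R. Then R is Noetherian and the natural homomorphism from the (R ∩ M)-adic completion of R to T is an isomorphism. -/

import Mathlib

set_option maxHeartbeats 1000000

/-- Heitmann: a quasi-local subring of a complete local ring whose map to `T/M²` is onto
and in which finitely generated ideals contract correctly is Noetherian with completion `T`. -/
theorem stmt_4 (T : Type*) [CommRing T] [IsNoetherianRing T] [IsLocalRing T]
    [IsAdicComplete (IsLocalRing.maximalIdeal T) T]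
    (R : Subring T) [IsLocalRing ↥R]
    (hmax : IsLocalRing.maximalIdeal ↥R = (IsLocalRing.maximalIdeal T).comap R.subtype)
    (hsurj : Function.Surjective
      ((Ideal.Quotient.mk ((IsLocalRing.maximalIdeal T) ^ 2)).comp R.subtype))
    (hcontr : ∀ I : Ideal ↥R, I.FG → (I.map R.subtype).comap R.subtype = I) :
    IsNoetherianRing ↥R ∧
      ∃ φ : AdicCompletion (IsLocalRing.maximalIdeal ↥R) ↥R ≃+* T,
        ∀ r : ↥R,
          φ (algebraMap ↥R (AdicCompletion (IsLocalRing.maximalIdeal ↥R) ↥R) r) = (r : T) := by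
  classical
  set M : Ideal T := IsLocalRing.maximalIdeal T with hM
  set mR : Ideal ↥R := IsLocalRing.maximalIdeal ↥R with hmR
  have hstT : ∀ K : Ideal T, (K • ⊤ : Ideal T) = K := fun K => by ext x; simp
  have hstR : ∀ K : Ideal ↥R, (K • ⊤ : Ideal ↥R) = K := fun K => by ext x; simp
  -- Part A : Noetherian
  have hNoeth : IsNoetherianRing ↥R := by
    rw [isNoetherianRing_iff_ideal_fg]
    intro I
    obtain ⟨S, hS⟩ := IsNoetherian.noetherian (I.map R.subtype)
    have hmem : ∀ s ∈ S, ∃ F : Finset T,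
        ↑F ⊆ (R.subtype : ↥R → T) '' I ∧ (s : T) ∈ Submodule.span T (F : Set T) := by
      intro s hs
      have : (s : T) ∈ Submodule.span T ((R.subtype : ↥R → T) '' I) := by
        have h1 : (s : T) ∈ I.map R.subtype := by
          rw [← hS]; exact Submodule.subset_span hs
        exact h1
      exact Submodule.mem_span_finite_of_mem_span this
    choose F hF1 hF2 using hmem
    set G : Finset T := S.attach.biUnion (fun s => F s s.2) with hG
    have hGsub : (G : Set T) ⊆ (R.subtype : ↥R → T) '' I := by
      intro x hx
      simp only [hG, Finset.coe_biUnion, Set.mem_iUnion] at hx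
      obtain ⟨s, _, hx⟩ := hx
      exact hF1 _ _ hx
    set I₀ : Ideal ↥R := Ideal.span ((R.subtype : ↥R → T) ⁻¹' (G : Set T)) with hI₀
    have hI₀fg : I₀.FG :=
      Submodule.fg_span (G.finite_toSet.preimage (Subtype.coe_injective.injOn))
    have hI₀le : I₀ ≤ I := by
      rw [hI₀, Ideal.span_le]
      intro r hr
      obtain ⟨a, ha, hae⟩ := hGsub hr
      rwa [show a = r from Subtype.coe_injective hae] at ha
    have hmapeq : I₀.map R.subtype = I.map R.subtype := by
      refine le_antisymm (Ideal.map_mono hI₀le) ?_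
      rw [hI₀, Ideal.map_span,
        Set.image_preimage_eq_of_subset (hGsub.trans (Set.image_subset_range _ _)), ← hS]
      rw [Submodule.span_le]
      intro s hs
      refine Submodule.span_mono ?_ (hF2 s hs)
      exact_mod_cast Finset.subset_biUnion_of_mem (fun a : {x // x ∈ S} => F a a.2)
        (Finset.mem_attach S ⟨s, hs⟩)
    have hIeq : I = I₀ := by
      refine le_antisymm ?_ hI₀le
      have h1 : I ≤ (I.map R.subtype).comap R.subtype := Ideal.le_comap_map
      rwa [← hmapeq, hcontr I₀ hI₀fg] at h1
    exact hIeq ▸ hI₀fg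
  haveI := hNoeth
  -- basic containment
  have hJle : Ideal.map R.subtype mR ≤ M := Ideal.map_le_iff_le_comap.2 hmax.le
  -- surjectivity mod M^2 restated
  have hsurj' : ∀ t : T, ∃ u : ↥R, t - (u : T) ∈ M ^ 2 := by
    intro t
    obtain ⟨u, hu⟩ := hsurj (Ideal.Quotient.mk (M ^ 2) t)
    refine ⟨u, ?_⟩
    have : Ideal.Quotient.mk (M ^ 2) (u : T) = Ideal.Quotient.mk (M ^ 2) t := hu
    rw [Ideal.Quotient.mk_eq_mk_iff_sub_mem] at this
    simpa using (M ^ 2).neg_mem this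
  -- Part B : M = map mR  (Nakayama)
  have hMeq : M = Ideal.map R.subtype mR := by
    refine le_antisymm ?_ hJle
    have hjac : M ≤ Ideal.jacobson ⊥ := by
      rw [IsLocalRing.jacobson_eq_maximalIdeal (⊥ : Ideal T) bot_ne_top]
    refine Submodule.le_of_le_smul_of_le_jacobson_bot (IsNoetherian.noetherian M) hjac ?_
    intro t ht
    obtain ⟨u, hu⟩ := hsurj' t
    have huM : (u : T) ∈ M := by
      have : (u : T) = t - (t - (u : T)) := by ring
      rw [this]
      exact M.sub_mem ht (Ideal.pow_le_self two_ne_zero hu)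
    have humR : u ∈ mR := by rw [hmax]; exact huM
    have ht2 : t - (u : T) ∈ M • M := by
      rw [smul_eq_mul, ← pow_two]; exact hu
    have : t = (u : T) + (t - (u : T)) := by ring
    rw [this]
    exact Submodule.add_mem_sup (Ideal.mem_map_of_mem _ humR) ht2
  have hpow : ∀ n : ℕ, (M ^ n : Ideal T) = Ideal.map R.subtype (mR ^ n) := fun n => by
    rw [Ideal.map_pow, ← hMeq]
  have hcomap : ∀ n : ℕ, Ideal.comap R.subtype (M ^ n) = mR ^ n := fun n => by
    rw [hpow, hcontr _ (IsNoetherian.noetherian _)]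
  -- Part D : approximation
  have step : ∀ n : ℕ, ∀ m ∈ (M ^ n : Ideal T),
      ∃ s : ↥R, m - (s : T) ∈ M ^ (n + 1) ∧ (s : T) ∈ M ^ n := by
    intro n m hm
    rw [hpow n] at hm
    have hm' : m ∈ Submodule.span T ((R.subtype : ↥R → T) '' (mR ^ n : Ideal ↥R)) := by
      exact hm
    refine Submodule.span_induction ?_ ?_ ?_ ?_ hm'
    · rintro _ ⟨a, ha, rfl⟩
      exact ⟨a, by simp, (hpow n) ▸ Ideal.mem_map_of_mem _ ha⟩
    · exact ⟨0, by simp, by simp⟩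
    · rintro x y - - ⟨s, h1, h2⟩ ⟨s', h1', h2'⟩
      refine ⟨s + s', ?_, ?_⟩
      · have : x + y - ((s + s' : ↥R) : T) = (x - s) + (y - s') := by push_cast; ring
        rw [this]; exact add_mem h1 h1'
      · push_cast; exact add_mem h2 h2'
    · rintro t x - ⟨s, h1, h2⟩
      obtain ⟨u, hu⟩ := hsurj' t
      refine ⟨u * s, ?_, ?_⟩
      · have heq : t • x - ((u * s : ↥R) : T) = t * (x - (s : T)) + (t - (u : T)) * s := by
          push_cast; ring_nf
        rw [heq]
        refine add_mem (Ideal.mul_mem_left _ _ h1) ?_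
        have h3 : (t - (u : T)) * (s : T) ∈ M ^ (2 + n) := by
          rw [pow_add]; exact Ideal.mul_mem_mul hu h2
        exact Ideal.pow_le_pow_right (by omega) h3
      · push_cast; exact Ideal.mul_mem_left _ _ h2
  have key0 : ∀ (n : ℕ) (t : T), ∃ r : ↥R, t - (r : T) ∈ (M ^ n : Ideal T) := by
    intro n
    induction n with
    | zero => exact fun t => ⟨0, by simp⟩
    | succ n ih =>
      intro t
      obtain ⟨r, hr⟩ := ih t
      obtain ⟨s, hs, -⟩ := step n _ hr
      refine ⟨r + s, ?_⟩
      have : t - ((r + s : ↥R) : T) = (t - (r : T)) - (s : T) := by push_cast; ring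
      rw [this]; exact hs
  choose g hg using key0
  -- key quotient equality
  have mkeq : ∀ (n : ℕ) (r r' : ↥R), ((r : T) - (r' : T) ∈ (M ^ n : Ideal T)) →
      (Submodule.Quotient.mk r : ↥R ⧸ (mR ^ n • ⊤ : Submodule ↥R ↥R))
        = Submodule.Quotient.mk r' := by
    intro n r r' h
    rw [Submodule.Quotient.eq]
    have : r - r' ∈ (mR ^ n • ⊤ : Ideal ↥R) := by
      rw [hstR, ← hcomap n]
      simpa using h
    exact this
  have hcoe : ∀ (n : ℕ) (r : ↥R), r ∈ mR ^ n → (r : T) ∈ (M ^ n : Ideal T) := by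
    intro n r hr
    rw [hpow n]
    exact Ideal.mem_map_of_mem _ hr
  -- the ring hom Ψ : T → AdicCompletion
  obtain ⟨Ψ, hΨ⟩ : ∃ Ψ : T →+* AdicCompletion mR ↥R,
      ∀ (t : T) (n : ℕ), (Ψ t).val n = Submodule.Quotient.mk (g n t) := by
    have compat : ∀ t : T, ∀ {m n : ℕ} (hmn : m ≤ n),
        AdicCompletion.transitionMap mR ↥R hmn
          (Submodule.Quotient.mk (g n t) : ↥R ⧸ (mR ^ n • ⊤ : Submodule ↥R ↥R))
          = Submodule.Quotient.mk (g m t) := by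
      intro t m n hmn
      show (Submodule.Quotient.mk (g n t) : ↥R ⧸ (mR ^ m • ⊤ : Submodule ↥R ↥R)) = Submodule.Quotient.mk (g m t)
      refine mkeq m _ _ ?_
      have : ((g n t : T)) - (g m t : T) = -(t - (g n t : T)) + (t - (g m t : T)) := by ring
      rw [this]
      exact add_mem (neg_mem (Ideal.pow_le_pow_right hmn (hg n t))) (hg m t)
    refine ⟨{ toFun := fun t => ⟨fun n => Submodule.Quotient.mk (g n t), compat t⟩,
              map_one' := ?_, map_mul' := ?_, map_zero' := ?_, map_add' := ?_ },
            fun t n => rfl⟩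
    · refine AdicCompletion.ext fun n => ?_
      show (Submodule.Quotient.mk (g n 1) : ↥R ⧸ (mR ^ n • ⊤ : Submodule ↥R ↥R)) = 1
      have h1 : (Submodule.Quotient.mk (g n 1) : ↥R ⧸ (mR ^ n • ⊤ : Submodule ↥R ↥R))
          = Submodule.Quotient.mk 1 := by
        refine mkeq n _ _ ?_
        have : ((g n 1 : T)) - ((1 : ↥R) : T) = -((1 : T) - (g n 1 : T)) := by push_cast; ring
        rw [this]; exact neg_mem (hg n 1)
      rw [h1]; rfl
    · intro x y
      refine AdicCompletion.ext fun n => ?_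
      show (Submodule.Quotient.mk (g n (x * y)) : ↥R ⧸ (mR ^ n • ⊤ : Submodule ↥R ↥R))
        = Submodule.Quotient.mk (g n x) * Submodule.Quotient.mk (g n y)
      have h2 : (Submodule.Quotient.mk (g n x) : ↥R ⧸ (mR ^ n • ⊤ : Submodule ↥R ↥R))
          * Submodule.Quotient.mk (g n y) = Submodule.Quotient.mk (g n x * g n y) := rfl
      rw [h2]
      refine mkeq n _ _ ?_
      have : ((g n (x * y) : T)) - ((g n x * g n y : ↥R) : T)
          = -(x * y - (g n (x * y) : T)) + (x * (y - (g n y : T))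
            + (x - (g n x : T)) * (g n y : T)) := by push_cast; ring
      rw [this]
      exact add_mem (neg_mem (hg n (x * y)))
        (add_mem (Ideal.mul_mem_left _ _ (hg n y)) (Ideal.mul_mem_right _ _ (hg n x)))
    · refine AdicCompletion.ext fun n => ?_
      show (Submodule.Quotient.mk (g n 0) : ↥R ⧸ (mR ^ n • ⊤ : Submodule ↥R ↥R)) = 0
      have h1 : (Submodule.Quotient.mk (g n 0) : ↥R ⧸ (mR ^ n • ⊤ : Submodule ↥R ↥R))
          = Submodule.Quotient.mk 0 := by
        refine mkeq n _ _ ?_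
        have : ((g n 0 : T)) - ((0 : ↥R) : T) = -((0 : T) - (g n 0 : T)) := by push_cast; ring
        rw [this]; exact neg_mem (hg n 0)
      rw [h1, Submodule.Quotient.mk_zero]
    · intro x y
      refine AdicCompletion.ext fun n => ?_
      show (Submodule.Quotient.mk (g n (x + y)) : ↥R ⧸ (mR ^ n • ⊤ : Submodule ↥R ↥R))
        = Submodule.Quotient.mk (g n x) + Submodule.Quotient.mk (g n y)
      have h2 : (Submodule.Quotient.mk (g n x) : ↥R ⧸ (mR ^ n • ⊤ : Submodule ↥R ↥R))
          + Submodule.Quotient.mk (g n y) = Submodule.Quotient.mk (g n x + g n y) := rfl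
      rw [h2]
      refine mkeq n _ _ ?_
      have : ((g n (x + y) : T)) - ((g n x + g n y : ↥R) : T)
          = -(x + y - (g n (x + y) : T)) + ((x - (g n x : T)) + (y - (g n y : T))) := by
        push_cast; ring
      rw [this]
      exact add_mem (neg_mem (hg n (x + y))) (add_mem (hg n x) (hg n y))
  -- injectivity
  have hinj : Function.Injective Ψ := by
    rw [injective_iff_map_eq_zero]
    intro t ht
    have hmem : ∀ n : ℕ, t ∈ (M ^ n : Ideal T) := by
      intro n
      have h0 : (Ψ t).val n = (0 : AdicCompletion mR ↥R).val n := by rw [ht]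
      rw [hΨ, AdicCompletion.val_zero] at h0
      have : g n t ∈ (mR ^ n • ⊤ : Submodule ↥R ↥R) := (Submodule.Quotient.mk_eq_zero _).1 h0
      rw [hstR] at this
      have h2 : (g n t : T) ∈ (M ^ n : Ideal T) := hcoe n _ this
      have h3 : t = (t - (g n t : T)) + (g n t : T) := by ring
      rw [h3]
      exact add_mem (hg n t) h2
    have hH : IsHausdorff M T := inferInstance
    refine hH.haus t fun n => ?_
    rw [SModEq.zero, hstT]
    exact hmem n
  -- surjectivity
  have hsurjΨ : Function.Surjective Ψ := by
    intro x
    have hx : ∀ n : ℕ, ∃ r : ↥R, Submodule.Quotient.mk r = x.val n := fun n =>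
      Submodule.Quotient.mk_surjective _ (x.val n)
    choose r hr using hx
    have hcauchy : ∀ {m n : ℕ}, m ≤ n →
        ((r m : T)) ≡ ((r n : T)) [SMOD (M ^ m • ⊤ : Submodule T T)] := by
      intro m n hmn
      rw [SModEq.sub_mem, hstT]
      have hxp := x.property hmn
      rw [← hr n, ← hr m] at hxp
      replace hxp : (Submodule.Quotient.mk (r n) : ↥R ⧸ (mR ^ m • ⊤ : Submodule ↥R ↥R)) = Submodule.Quotient.mk (r m) := hxp
      have : r n - r m ∈ (mR ^ m • ⊤ : Ideal ↥R) := (Submodule.Quotient.eq _).1 hxp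
      rw [hstR] at this
      have h2 : ((r n - r m : ↥R) : T) ∈ (M ^ m : Ideal T) := hcoe m _ this
      have h3 : ((r m : T)) - (r n : T) = -(((r n - r m : ↥R) : T)) := by push_cast; ring
      rw [h3]
      exact neg_mem h2
    have hP : IsPrecomplete M T := inferInstance
    obtain ⟨L, hL⟩ := IsPrecomplete.prec hP hcauchy
    refine ⟨L, AdicCompletion.ext fun n => ?_⟩
    rw [hΨ, ← hr n]
    refine mkeq n _ _ ?_
    have hLn : ((r n : T)) - L ∈ (M ^ n : Ideal T) := by
      have := hL n
      rw [SModEq.sub_mem, hstT] at this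
      exact this
    have : ((g n L : T)) - (r n : T) = -(L - (g n L : T)) + -(((r n : T)) - L) := by ring
    rw [this]
    exact add_mem (neg_mem (hg n L)) (neg_mem hLn)
  -- assemble
  refine ⟨hNoeth, (RingEquiv.ofBijective Ψ ⟨hinj, hsurjΨ⟩).symm, fun r => ?_⟩
  have hkey : algebraMap ↥R (AdicCompletion mR ↥R) r = Ψ (r : T) := by
    refine AdicCompletion.ext fun n => ?_
    rw [hΨ]
    have hA : (algebraMap ↥R (AdicCompletion mR ↥R) r).val n
        = (Submodule.Quotient.mk r : ↥R ⧸ (mR ^ n • ⊤ : Submodule ↥R ↥R)) := rfl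
    rw [hA]
    exact mkeq n _ _ (hg n (r : T))
  rw [hkey]
  exact (RingEquiv.ofBijective Ψ ⟨hinj, hsurjΨ⟩).symm_apply_apply (r : T)
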